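/- Let p and q be real numbers with p > 0, q > 0 and p ≠ q, and let n, κ be natural numbers. Then the (p,q)-binomial coefficient with negative upper argument satisfies C_{p,q}(−n,κ) = (−1)^κ · (pq)^{−nκ−κ(κ−1)/2} · C_{p,q}(n+κ−1,κ). -/

import Mathlib

/-- The (p,q)-deformed number `[x]_{p,q} = (p^x - q^x)/(p - q)` (real powers). -/
noncomputable def pqNum (p q x : ℝ) : ℝ := (p ^ x - q ^ x) / (p - q)

/-- The (p,q)-factorial `[n]_{p,q}! = ∏_{i=1}^n [i]_{p,q}`. -/
noncomputable def pqFac (p q : ℝ) (n : ℕ) : ℝ := ∏ i ∈ Finset.range n, pqNum p q ((i : ℝ) + 1)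

/-- The κ-th order (p,q)-factorial `[x]_{κ,p,q} = ∏_{v=0}^{κ-1} [x-v]_{p,q}`. -/
noncomputable def pqFacOrd (p q x : ℝ) (j : ℕ) : ℝ := ∏ v ∈ Finset.range j, pqNum p q (x - (v : ℝ))

/-- The (p,q)-binomial coefficient with real upper argument: `C_{p,q}(x,κ) = [x]_{κ,p,q}/[κ]_{p,q}!`. -/
noncomputable def pqBinomR (p q x : ℝ) (k : ℕ) : ℝ := pqFacOrd p q x k / pqFac p q k

lemma pqNum_neg (p q : ℝ) (hp : 0 < p) (hq : 0 < q) (x : ℝ) :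
    pqNum p q (-x) = -((p * q) ^ (-x)) * pqNum p q x := by
  unfold pqNum
  rw [Real.rpow_neg hp.le, Real.rpow_neg hq.le, Real.rpow_neg (mul_pos hp hq).le,
    Real.mul_rpow hp.le hq.le]
  have hpx : p ^ x ≠ 0 := (Real.rpow_pos_of_pos hp x).ne'
  have hqx : q ^ x ≠ 0 := (Real.rpow_pos_of_pos hq x).ne'
  field_simp
  ring

lemma rpow_sum' {ι : Type*} (a : ℝ) (ha : 0 < a) (s : Finset ι) (f : ι → ℝ) :
    a ^ (∑ i ∈ s, f i) = ∏ i ∈ s, a ^ f i := by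
  classical
  induction s using Finset.cons_induction with
  | empty => simp
  | cons i s hi ih => rw [Finset.sum_cons, Finset.prod_cons, Real.rpow_add ha, ih]

lemma sum_range_cast (κ : ℕ) : (∑ v ∈ Finset.range κ, (v : ℝ)) = κ * (κ - 1) / 2 := by
  induction κ with
  | zero => simp
  | succ m ih => rw [Finset.sum_range_succ, ih]; push_cast; ring

/-- `C_{p,q}(-n,κ) = (-1)^κ (pq)^{-nκ-κ(κ-1)/2} C_{p,q}(n+κ-1,κ)`. -/
theorem pqBinomR_neg (p q : ℝ) (hp : 0 < p) (hq : 0 < q) (hpq : p ≠ q) (n κ : ℕ) :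
    pqBinomR p q (-(n : ℝ)) κ =
      (-1 : ℝ) ^ κ * (p * q) ^ (-((n : ℝ) * (κ : ℝ)) - (κ : ℝ) * ((κ : ℝ) - 1) / 2)
        * pqBinomR p q ((n : ℝ) + (κ : ℝ) - 1) κ := by
  have hF : pqFac p q κ ≠ 0 := by
    unfold pqFac
    refine Finset.prod_ne_zero_iff.mpr fun i _ => ?_
    unfold pqNum
    apply div_ne_zero _ (sub_ne_zero.mpr hpq)
    intro h
    have hx : (0:ℝ) < (i : ℝ) + 1 := by positivity
    have h3 : (p ^ ((i:ℝ)+1)) ^ (((i:ℝ)+1)⁻¹) = (q ^ ((i:ℝ)+1)) ^ (((i:ℝ)+1)⁻¹) := by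
      rw [sub_eq_zero.mp h]
    rw [← Real.rpow_mul hp.le, ← Real.rpow_mul hq.le, mul_inv_cancel₀ hx.ne',
      Real.rpow_one, Real.rpow_one] at h3
    exact hpq h3
  unfold pqBinomR
  rw [div_eq_iff hF, mul_assoc ((-1:ℝ)^κ * _), div_mul_cancel₀ _ hF]
  unfold pqFacOrd
  have key : ∏ v ∈ Finset.range κ, pqNum p q (-(n : ℝ) - v) =
      (-1 : ℝ) ^ κ * (p * q) ^ (∑ v ∈ Finset.range κ, (-((n : ℝ) + v))) *
        ∏ v ∈ Finset.range κ, pqNum p q ((n : ℝ) + v) := by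
    have step : ∏ v ∈ Finset.range κ, pqNum p q (-(n : ℝ) - v) =
        ∏ v ∈ Finset.range κ, ((-1 : ℝ) * (p * q) ^ (-((n : ℝ) + v)) * pqNum p q ((n : ℝ) + v)) := by
      refine Finset.prod_congr rfl fun v _ => ?_
      have h0 : -(n : ℝ) - v = -((n : ℝ) + v) := by ring
      rw [h0, pqNum_neg p q hp hq]
      ring
    rw [step, Finset.prod_mul_distrib, Finset.prod_mul_distrib, Finset.prod_const,
      Finset.card_range, rpow_sum' _ (mul_pos hp hq)]
  rw [key]
  have hsum : (∑ v ∈ Finset.range κ, (-((n : ℝ) + v))) =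
      -((n : ℝ) * κ) - (κ : ℝ) * ((κ : ℝ) - 1) / 2 := by
    simp only [neg_add]
    rw [Finset.sum_add_distrib, Finset.sum_const, Finset.sum_neg_distrib, sum_range_cast,
      Finset.card_range]
    push_cast
    ring
  have hrefl : ∏ v ∈ Finset.range κ, pqNum p q ((n : ℝ) + (κ : ℝ) - 1 - v) =
      ∏ v ∈ Finset.range κ, pqNum p q ((n : ℝ) + v) := by
    rw [← Finset.prod_range_reflect (fun j => pqNum p q ((n : ℝ) + j)) κ]
    refine Finset.prod_congr rfl fun v hv => ?_
    have hv' : v < κ := Finset.mem_range.mp hv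
    congr 1
    have : ((κ - 1 - v : ℕ) : ℝ) = (κ : ℝ) - 1 - v := by
      have h1 : κ - 1 - v = κ - (1 + v) := by omega
      rw [h1, Nat.cast_sub (by omega)]
      push_cast
      ring
    rw [this]
    ring
  rw [hsum, hrefl]
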